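/- Let (φ_t) be a non-elliptic semigroup in the unit disc 𝔻 with Koenigs function h. If h(𝔻) is starlike with respect to h(0), i.e. for every w ∈ h(𝔻) the segment {(1−s)h(0) + s·w : s ∈ [0,1]} is contained in h(𝔻), then the total speed t ↦ v(t) is non-decreasing on [0,+∞). -/

import Mathlib

open Complex Filter Topology Set MeasureTheory

noncomputable section

/-- The unit disc in the complex plane. -/
def unitDisc : Set ℂ := {z : ℂ | ‖z‖ < 1}

/-- The inverse hyperbolic tangent: `arctanh x = (1/2)·log((1+x)/(1−x))`. -/
def arctanh (x : ℝ) : ℝ := (1 / 2) * Real.log ((1 + x) / (1 - x))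

/-- The hyperbolic distance on the unit disc:
`k_𝔻(z,w) = arctanh |(z−w)/(1−conj(z)·w)|`. -/
def kD (z w : ℂ) : ℝ :=
  arctanh (‖(z - w) / (1 - (starRingEnd ℂ) z * w)‖)

/-- `φ` is a continuous one-parameter semigroup of holomorphic self-maps of the unit disc. -/
structure IsDiscSemigroup (φ : ℝ → ℂ → ℂ) : Prop where
  mapsTo : ∀ t : ℝ, 0 ≤ t → Set.MapsTo (φ t) unitDisc unitDisc
  holo : ∀ t : ℝ, 0 ≤ t → DifferentiableOn ℂ (φ t) unitDisc
  id0 : ∀ z ∈ unitDisc, φ 0 z = z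
  comp : ∀ s t : ℝ, 0 ≤ s → 0 ≤ t → ∀ z ∈ unitDisc, φ (t + s) z = φ t (φ s z)
  cont : ContinuousOn (fun p : ℝ × ℂ => φ p.1 p.2) (Set.Ici 0 ×ˢ unitDisc)

/-- A semigroup in the disc is non-elliptic if it has no fixed point in the disc
for positive times. -/
structure IsNonElliptic (φ : ℝ → ℂ → ℂ) extends IsDiscSemigroup φ : Prop where
  noFixedPoint : ∀ t : ℝ, 0 < t → ∀ z ∈ unitDisc, φ t z ≠ z

/-- `τ` is the Denjoy-Wolff point of the semigroup `φ`: a boundary point to which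
all orbits converge. -/
def IsDenjoyWolff (φ : ℝ → ℂ → ℂ) (τ : ℂ) : Prop :=
  ‖τ‖ = 1 ∧ ∀ z ∈ unitDisc, Tendsto (fun t => φ t z) atTop (𝓝 τ)

/-- `h` is a Koenigs function of the semigroup `φ`: univalent on the disc with
`h(φ_t(z)) = h(z) + it`. -/
def IsKoenigs (φ : ℝ → ℂ → ℂ) (h : ℂ → ℂ) : Prop :=
  DifferentiableOn ℂ h unitDisc ∧ Set.InjOn h unitDisc ∧
    ∀ t : ℝ, 0 ≤ t → ∀ z ∈ unitDisc, h (φ t z) = h z + Complex.I * t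

/-- `p` is the hyperbolic orthogonal projection onto the geodesic `(−1,1)·τ`:
for every `z` in the disc, `p z` lies on the geodesic and minimizes the hyperbolic
distance from `z` to the geodesic. -/
def IsOrthProjection (τ : ℂ) (p : ℂ → ℂ) : Prop :=
  ∀ z ∈ unitDisc,
    (∃ r : ℝ, r ∈ Set.Ioo (-1 : ℝ) 1 ∧ p z = (r : ℂ) * τ) ∧
    ∀ r : ℝ, r ∈ Set.Ioo (-1 : ℝ) 1 → kD z (p z) ≤ kD z ((r : ℂ) * τ)

/-- The total speed `v(t) = k_𝔻(0, φ_t(0))` of a semigroup. -/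
def totalSpeed (φ : ℝ → ℂ → ℂ) (t : ℝ) : ℝ := kD 0 (φ t 0)

/-- The orthogonal speed `v^o(t) = k_𝔻(0, π(φ_t(0)))` of a semigroup, relative to the
orthogonal projection `p` onto the geodesic `(−1,1)·τ`. -/
def orthSpeed (φ : ℝ → ℂ → ℂ) (p : ℂ → ℂ) (t : ℝ) : ℝ := kD 0 (p (φ t 0))

/-- `δ⁺(t)`: the truncated distance from `z₀ + it` to the part of the complement of `Ω`
lying to the right of the vertical line through `z₀`. -/
def deltaPlus (Ω : Set ℂ) (z₀ : ℂ) (t : ℝ) : ℝ :=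
  min t (sInf {d : ℝ | ∃ w : ℂ, w ∉ Ω ∧ z₀.re ≤ w.re ∧ d = ‖w - (z₀ + Complex.I * t)‖})

/-- `δ⁻(t)`: the truncated distance from `z₀ + it` to the part of the complement of `Ω`
lying to the left of the vertical line through `z₀`. -/
def deltaMinus (Ω : Set ℂ) (z₀ : ℂ) (t : ℝ) : ℝ :=
  min t (sInf {d : ℝ | ∃ w : ℂ, w ∉ Ω ∧ w.re ≤ z₀.re ∧ d = ‖w - (z₀ + Complex.I * t)‖})

/-- `Ω` is quasi-symmetric with respect to vertical axes. -/
def QuasiSymmetric (Ω : Set ℂ) : Prop :=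
  ∃ z₀ ∈ Ω, ∃ K : ℝ, 0 < K ∧ ∀ t : ℝ, 0 ≤ t →
    K⁻¹ * deltaMinus Ω z₀ t ≤ deltaPlus Ω z₀ t ∧ deltaPlus Ω z₀ t ≤ K * deltaMinus Ω z₀ t

/-- `Ω` is starlike with respect to `w₀`: every segment from `w₀` to a point of `Ω`
is contained in `Ω`. -/
def StarlikeWrt (Ω : Set ℂ) (w₀ : ℂ) : Prop :=
  ∀ w ∈ Ω, ∀ s : ℝ, s ∈ Set.Icc (0 : ℝ) 1 → (1 - (s : ℂ)) * w₀ + (s : ℂ) * w ∈ Ω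

/-- The orbit of `0` converges non-tangentially to `τ`:
`limsup_{t→+∞} |τ − φ_t(0)|/(1 − |φ_t(0)|) < +∞`. -/
def ConvergesNonTangentially (φ : ℝ → ℂ → ℂ) (τ : ℂ) : Prop :=
  Filter.limsup (fun t : ℝ =>
    ((‖τ - φ t 0‖ / (1 - ‖φ t 0‖) : ℝ) : EReal)) atTop < ⊤

/-- `f` is eventually non-decreasing. -/
def EventuallyNondecreasing (f : ℝ → ℝ) : Prop :=
  ∃ T : ℝ, ∀ s t : ℝ, T ≤ s → s ≤ t → f s ≤ f t

/-- The Cayley transform from the unit disc to the right half-plane. -/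
def cayley (z : ℂ) : ℂ := (1 + z) / (1 - z)

/-- The inverse Cayley transform, from the right half-plane to the unit disc. -/
def cayleyInv (w : ℂ) : ℂ := (w - 1) / (w + 1)

/-- `Θ_ρ := {iy : y ∈ ℝ, |y| ≥ ρ}`, a subset of the imaginary axis. -/
def Theta (ρ : ℝ) : Set ℂ := {z : ℂ | ∃ y : ℝ, z = Complex.I * (y : ℂ) ∧ ρ ≤ |y|}

/-- `Γ*_t := {iy : |y| ≥ inf_{u ≥ t} ρ_u}`. -/
def GammaStar (ρ : ℝ → ℝ) (t : ℝ) : Set ℂ :=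
  {z : ℂ | ∃ y : ℝ, z = Complex.I * (y : ℂ) ∧ sInf {r : ℝ | ∃ u : ℝ, t ≤ u ∧ r = ρ u} ≤ |y|}

/-- The harmonic measure at `w` (a point of the right half-plane) of a Borel subset `E`
of the imaginary axis, with respect to the right half-plane:
`ω(w,E,ℍ) = (1/π) ∫_{{s : is ∈ E}} Re w/((Re w)² + (Im w − s)²) ds`. -/
def omegaH (w : ℂ) (E : Set ℂ) : ℝ :=
  (1 / Real.pi) *
    ∫ s in {s : ℝ | Complex.I * (s : ℂ) ∈ E}, w.re / (w.re ^ 2 + (w.im - s) ^ 2)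

/-- The Euclidean arclength of the closed arc of the unit circle containing `1`
with endpoints `a` and `conj a` (where `Im a > 0`), namely `2·arg a`. -/
def arcLength (a : ℂ) : ℝ := 2 * Complex.arg a

/-- The harmonic measure at `0` with respect to the unit disc of the closed arc of the
unit circle containing `1` with endpoints `a` and `conj a`: `ℓ(A)/(2π)`. -/
def omegaDiscZero (a : ℂ) : ℝ := arcLength a / (2 * Real.pi)

/-- `Π_α := {z ∈ ℂ : Im z > |Re z|^α}`. -/
def PiDom (α : ℝ) : Set ℂ := {z : ℂ | |z.re| ^ α < z.im}

/-- `W(θ) := {z ≠ 0 : arg z ∈ (π/2 − θ, π/2)}`. -/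
def Wsector (θ : ℝ) : Set ℂ :=
  {z : ℂ | z ≠ 0 ∧ Complex.arg z ∈ Set.Ioo (Real.pi / 2 - θ) (Real.pi / 2)}

/-- `Ξ(α,θ) := ({Re z ≤ 0} ∩ Π_α) ∪ W(θ)`. -/
def Xi (α θ : ℝ) : Set ℂ := ({z : ℂ | z.re ≤ 0} ∩ PiDom α) ∪ Wsector θ



lemma aux_not_eventually_const {f : ℂ → ℂ} {s : Set ℂ} (hs : IsOpen s)
    (hinj : Set.InjOn f s) {z₀ : ℂ} (hz₀ : z₀ ∈ s) :
    ¬ (∀ᶠ z in 𝓝 z₀, f z = f z₀) := by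
  intro hev
  obtain ⟨r, hr, hball⟩ :=
    Metric.eventually_nhds_iff_ball.mp (hev.and (hs.eventually_mem hz₀))
  set z₁ := z₀ + ((r / 2 : ℝ) : ℂ) with hz₁def
  have hz₁ : z₁ ∈ Metric.ball z₀ r := by
    simp only [hz₁def, Metric.mem_ball, Complex.dist_eq, add_sub_cancel_left, Complex.norm_real, Real.norm_eq_abs]
    rw [abs_of_pos (by linarith)]
    linarith
  obtain ⟨h1, h2⟩ := hball z₁ hz₁
  have : z₁ = z₀ := hinj h2 hz₀ h1
  rw [hz₁def] at this
  have : ((r / 2 : ℝ) : ℂ) = 0 := by linear_combination this - z₀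
  have : (r / 2 : ℝ) = 0 := by exact_mod_cast this
  linarith

lemma deriv_ne_zero_of_injOn {f : ℂ → ℂ} {s : Set ℂ} (hs : IsOpen s)
    (hd : DifferentiableOn ℂ f s) (hinj : Set.InjOn f s) {z₀ : ℂ} (hz₀ : z₀ ∈ s) :
    deriv f z₀ ≠ 0 := by
  have hA : AnalyticAt ℂ f z₀ := hd.analyticAt (hs.mem_nhds hz₀)
  have hF : AnalyticAt ℂ (fun z => f z - f z₀) z₀ := hA.sub analyticAt_const
  have hne : ¬ (∀ᶠ z in 𝓝 z₀, f z - f z₀ = 0) := by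
    intro hev
    exact aux_not_eventually_const hs hinj hz₀ (hev.mono fun z hz => sub_eq_zero.mp hz)
  obtain ⟨n, g, hg, hg0, heq⟩ := hF.exists_eventuallyEq_pow_smul_nonzero_iff.mpr hne
  simp only [smul_eq_mul] at heq
  intro hderiv
  -- n = 0 impossible
  have hn0 : n ≠ 0 := by
    intro hn
    have := heq.self_of_nhds
    simp [hn] at this
    exact hg0 (by simpa using this.symm)
  -- n = 1 impossible since deriv f z₀ = 0
  have hn1 : n ≠ 1 := by
    intro hn
    subst hn
    have hda : HasDerivAt (fun z => f z₀ + (z - z₀) * g z) (g z₀) z₀ := by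
      have h1 : HasDerivAt (fun z : ℂ => z - z₀) 1 z₀ := (hasDerivAt_id z₀).sub_const z₀
      have h2 : HasDerivAt g (deriv g z₀) z₀ := hg.differentiableAt.hasDerivAt
      have := (h1.mul h2).const_add (f z₀)
      simpa using this
    have : HasDerivAt f (g z₀) z₀ := by
      apply hda.congr_of_eventuallyEq
      filter_upwards [heq] with z hz
      rw [pow_one] at hz
      linear_combination hz
    rw [this.deriv] at hderiv
    exact hg0 hderiv
  have hn2 : 2 ≤ n := by omega
  -- build the n-th root ψ
  set c := g z₀ with hc
  obtain ⟨ρ, hρ⟩ := IsAlgClosed.exists_pow_nat_eq c (show 0 < n by omega)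
  have hρ0 : ρ ≠ 0 := by
    intro hr; rw [hr] at hρ; simp [zero_pow hn0] at hρ; exact hg0 hρ.symm
  set ψ : ℂ → ℂ := fun z => (z - z₀) * (ρ * Complex.exp (Complex.log (g z / c) / n)) with hψ
  have hkan : AnalyticAt ℂ (fun z => g z / c) z₀ := hg.div analyticAt_const hg0
  have hk1 : g z₀ / c = 1 := div_self hg0
  have hψan : AnalyticAt ℂ ψ z₀ := by
    apply (analyticAt_id.sub analyticAt_const).mul
    apply analyticAt_const.mul
    apply analyticAt_cexp.comp
    apply AnalyticAt.div _ analyticAt_const (Nat.cast_ne_zero.mpr hn0)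
    · exact (analyticAt_clog (by rw [hk1]; exact Complex.one_mem_slitPlane)).comp hkan
  -- eventually ψ ^ n = f - f z₀
  have hgC : ContinuousAt g z₀ := hg.continuousAt
  have hgne : ∀ᶠ z in 𝓝 z₀, g z ≠ 0 := hgC.eventually_ne hg0
  have hψpow : ∀ᶠ z in 𝓝 z₀, ψ z ^ n = f z - f z₀ := by
    filter_upwards [heq, hgne] with z h1 h2
    have hgc : g z / c ≠ 0 := div_ne_zero h2 hg0
    have : Complex.exp (Complex.log (g z / c) / n) ^ n = g z / c := by
      rw [← Complex.exp_nat_mul]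
      rw [mul_div_cancel₀ _ (by exact_mod_cast (by omega : n ≠ 0) : (n:ℂ) ≠ 0)]
      exact Complex.exp_log hgc
    rw [hψ]
    simp only
    rw [mul_pow, mul_pow, this, hρ, h1]
    field_simp
  have hψ0 : ψ z₀ = 0 := by simp [hψ]
  have hψnc : ¬ (∀ᶠ z in 𝓝 z₀, ψ z = ψ z₀) := by
    intro hev
    apply hne
    filter_upwards [hev, hψpow] with z h1 h2
    rw [← h2, h1, hψ0, zero_pow hn0]
  rcases hψan.eventually_constant_or_nhds_le_map_nhds with hcase | hmap
  · exact hψnc hcase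
  obtain ⟨V, hV, hVprop⟩ := (hψpow.and (hs.eventually_mem hz₀)).exists_mem
  have himg : ψ '' V ∈ 𝓝 (0:ℂ) := by
    rw [← hψ0]
    exact hmap (mem_map.mpr (mem_of_superset hV (Set.subset_preimage_image ψ V)))
  obtain ⟨ε, hε, hball⟩ := Metric.mem_nhds_iff.mp himg
  set ζ : ℂ := Complex.exp (2 * Real.pi * Complex.I / n) with hζ
  have hζn : ζ ^ n = 1 := by
    rw [hζ, ← Complex.exp_nat_mul, mul_div_cancel₀ _ (Nat.cast_ne_zero.mpr hn0 : (n:ℂ) ≠ 0)]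
    exact_mod_cast Complex.exp_two_pi_mul_I
  have hζ1 : ζ ≠ 1 := by
    intro hone
    rw [hζ, Complex.exp_eq_one_iff] at hone
    obtain ⟨k, hk⟩ := hone
    have h2pi : (2 * Real.pi * Complex.I : ℂ) ≠ 0 := by
      simp [Real.pi_ne_zero, Complex.I_ne_zero]
    have hn' : (n : ℂ) ≠ 0 := Nat.cast_ne_zero.mpr hn0
    have hk2 : (2 * Real.pi * Complex.I : ℂ) = (k:ℂ) * (2 * Real.pi * Complex.I) * n := by
      have := congrArg (fun z : ℂ => z * (n:ℂ)) hk
      simpa [div_mul_cancel₀ _ hn'] using this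
    have hkn : ((k * (n:ℤ) : ℤ) : ℂ) = ((1:ℤ) : ℂ) := by
      push_cast
      apply mul_right_cancel₀ h2pi
      linear_combination -hk2
    have hkn' : k * (n:ℤ) = 1 := by exact_mod_cast hkn
    have : (n:ℤ) ≤ 1 := Int.le_of_dvd one_pos ⟨k, by linarith [hkn']⟩
    omega
  set w₀ : ℂ := ((ε / (2 * (1 + ‖ζ‖)) : ℝ) : ℂ) with hw₀
  have hζabs : (0:ℝ) ≤ ‖ζ‖ := norm_nonneg ζ
  have hw₀pos : (0:ℝ) < ε / (2 * (1 + ‖ζ‖)) := by positivity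
  have hw₀0 : w₀ ≠ 0 := by
    simp only [hw₀, ne_eq, Complex.ofReal_eq_zero]
    linarith
  have hw₀abs : ‖w₀‖ = ε / (2 * (1 + ‖ζ‖)) := by
    rw [hw₀, Complex.norm_real, Real.norm_eq_abs, abs_of_pos hw₀pos]
  have hw₁mem : w₀ ∈ Metric.ball (0:ℂ) ε := by
    simp only [Metric.mem_ball, dist_zero_right, hw₀abs]
    rw [div_lt_iff₀ (by positivity)]
    nlinarith
  have hw₂mem : ζ * w₀ ∈ Metric.ball (0:ℂ) ε := by
    simp only [Metric.mem_ball, dist_zero_right, norm_mul, hw₀abs]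
    have hpos : (0:ℝ) < 1 + ‖ζ‖ := by linarith
    calc ‖ζ‖ * (ε / (2 * (1 + ‖ζ‖)))
        ≤ (1 + ‖ζ‖) * (ε / (2 * (1 + ‖ζ‖))) :=
          mul_le_mul_of_nonneg_right (by linarith) (le_of_lt hw₀pos)
      _ = ε / 2 := by field_simp
      _ < ε := by linarith
  obtain ⟨z₁, hz₁V, hψz₁⟩ := hball hw₁mem
  obtain ⟨z₂, hz₂V, hψz₂⟩ := hball hw₂mem
  have hz₁s : z₁ ∈ s := (hVprop z₁ hz₁V).2
  have hz₂s : z₂ ∈ s := (hVprop z₂ hz₂V).2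
  have hfz₁ : f z₁ - f z₀ = w₀ ^ n := by rw [← (hVprop z₁ hz₁V).1, hψz₁]
  have hfz₂ : f z₂ - f z₀ = w₀ ^ n := by
    rw [← (hVprop z₂ hz₂V).1, hψz₂, mul_pow, hζn, one_mul]
  have hfeq : f z₁ = f z₂ := by linear_combination hfz₁ - hfz₂
  have hz12 : z₁ = z₂ := hinj hz₁s hz₂s hfeq
  rw [hz12, hψz₂] at hψz₁
  have : (ζ - 1) * w₀ = 0 := by linear_combination hψz₁
  rcases mul_eq_zero.mp this with h | h
  · exact hζ1 (by linear_combination h)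
  · exact hw₀0 h

lemma image_mem_nhds_of_injOn {f : ℂ → ℂ} {s : Set ℂ} (hs : IsOpen s)
    (hd : DifferentiableOn ℂ f s) (hinj : Set.InjOn f s) {z₀ : ℂ} (hz₀ : z₀ ∈ s)
    {U : Set ℂ} (hU : U ∈ 𝓝 z₀) : f '' U ∈ 𝓝 (f z₀) := by
  have hA : AnalyticAt ℂ f z₀ := hd.analyticAt (hs.mem_nhds hz₀)
  rcases hA.eventually_constant_or_nhds_le_map_nhds with hc | hm
  · exact absurd hc (aux_not_eventually_const hs hinj hz₀)
  · exact hm (mem_map.mpr (mem_of_superset hU (Set.subset_preimage_image f U)))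

lemma isOpen_image_of_injOn {f : ℂ → ℂ} {s : Set ℂ} (hs : IsOpen s)
    (hd : DifferentiableOn ℂ f s) (hinj : Set.InjOn f s) : IsOpen (f '' s) := by
  rw [isOpen_iff_mem_nhds]
  rintro w ⟨z, hz, rfl⟩
  exact image_mem_nhds_of_injOn hs hd hinj hz (hs.mem_nhds hz)

lemma continuousAt_invFunOn {f : ℂ → ℂ} {s : Set ℂ} (hs : IsOpen s)
    (hd : DifferentiableOn ℂ f s) (hinj : Set.InjOn f s) {z₀ : ℂ} (hz₀ : z₀ ∈ s) :
    ContinuousAt (Function.invFunOn f s) (f z₀) := by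
  have hg0 : Function.invFunOn f s (f z₀) = z₀ := hinj.leftInvOn_invFunOn hz₀
  rw [ContinuousAt, hg0, Filter.tendsto_def]
  intro U hU
  obtain ⟨r, hr, hball⟩ := Metric.mem_nhds_iff.mp (Filter.inter_mem hU (hs.mem_nhds hz₀))
  have himg : f '' (Metric.ball z₀ r) ∈ 𝓝 (f z₀) :=
    image_mem_nhds_of_injOn hs hd hinj hz₀ (Metric.ball_mem_nhds z₀ hr)
  apply mem_of_superset himg
  rintro w ⟨u, hu, rfl⟩
  have hus : u ∈ s := (hball hu).2
  have h1 : Function.invFunOn f s (f u) = u := hinj.leftInvOn_invFunOn hus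
  rw [Set.mem_preimage, h1]
  exact (hball hu).1

lemma differentiableOn_invFunOn {f : ℂ → ℂ} {s : Set ℂ} (hs : IsOpen s)
    (hd : DifferentiableOn ℂ f s) (hinj : Set.InjOn f s) :
    DifferentiableOn ℂ (Function.invFunOn f s) (f '' s) := by
  rintro w ⟨z, hz, rfl⟩
  apply DifferentiableAt.differentiableWithinAt
  have hcont : ContinuousAt (Function.invFunOn f s) (f z) := continuousAt_invFunOn hs hd hinj hz
  have hF : HasDerivAt f (deriv f z) z := (hd.differentiableAt (hs.mem_nhds hz)).hasDerivAt
  have hne : deriv f z ≠ 0 := deriv_ne_zero_of_injOn hs hd hinj hz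
  have hg0 : Function.invFunOn f s (f z) = z := hinj.leftInvOn_invFunOn hz
  have hF' : HasDerivAt f (deriv f z) (Function.invFunOn f s (f z)) := by rw [hg0]; exact hF
  have hev : ∀ᶠ w' in 𝓝 (f z), f (Function.invFunOn f s w') = w' := by
    filter_upwards [(isOpen_image_of_injOn hs hd hinj).eventually_mem
      (Set.mem_image_of_mem f hz)] with w' hw'
    obtain ⟨u, hu, rfl⟩ := hw'
    exact Function.invFunOn_eq ⟨u, hu, rfl⟩
  exact (HasDerivAt.of_local_left_inverse hcont hF' hne hev).differentiableAt


lemma unitDisc_eq_ball : unitDisc = Metric.ball (0:ℂ) 1 := by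
  ext z; simp [unitDisc, Complex.dist_eq]

lemma isOpen_unitDisc : IsOpen unitDisc := by
  rw [unitDisc_eq_ball]; exact Metric.isOpen_ball

lemma zero_mem_unitDisc : (0:ℂ) ∈ unitDisc := by simp [unitDisc]

lemma kD_zero_left (w : ℂ) : kD 0 w = arctanh ‖w‖ := by
  simp [kD]

lemma arctanh_le_arctanh {x y : ℝ} (hx : 0 ≤ x) (hxy : x ≤ y) (hy : y < 1) :
    arctanh x ≤ arctanh y := by
  unfold arctanh
  have h1 : 0 < 1 - y := by linarith
  have h2 : 0 < 1 - x := by linarith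
  have hpos : 0 < (1 + x) / (1 - x) := by positivity
  apply mul_le_mul_of_nonneg_left _ (by norm_num : (0:ℝ) ≤ 1/2)
  apply Real.log_le_log hpos
  rw [div_le_div_iff₀ h2 h1]
  nlinarith

/-- **Proposition 3.4:** if the image of the Koenigs function is starlike with respect to
`h(0)`, the total speed is non-decreasing on `[0,+∞)`. -/
theorem totalSpeed_monotoneOn_of_starlike
    (φ : ℝ → ℂ → ℂ) (h : ℂ → ℂ)
    (hφ : IsNonElliptic φ) (hKoe : IsKoenigs φ h)
    (hstar : StarlikeWrt (h '' unitDisc) (h 0)) :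
    MonotoneOn (totalSpeed φ) (Set.Ici (0 : ℝ)) := by
  obtain ⟨hd, hinj, hfun⟩ := hKoe
  have hopen : IsOpen unitDisc := isOpen_unitDisc
  have h0D : (0:ℂ) ∈ unitDisc := zero_mem_unitDisc
  intro s hs t ht hst
  simp only [Set.mem_Ici] at hs ht
  rcases eq_or_lt_of_le (hs.trans hst) with h0t | h0t
  · have hs0 : s = 0 := le_antisymm (h0t ▸ hst) hs
    have ht0 : t = 0 := h0t.symm
    rw [hs0, ht0]
  · set u : ℝ := s / t with hu
    have hu0 : 0 ≤ u := div_nonneg hs h0t.le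
    have hu1 : u ≤ 1 := (div_le_one h0t).mpr hst
    have hzt : φ t 0 ∈ unitDisc := hφ.mapsTo t ht h0D
    have hzs : φ s 0 ∈ unitDisc := hφ.mapsTo s hs h0D
    have hht : h (φ t 0) = h 0 + Complex.I * t := hfun t ht 0 h0D
    have hhs : h (φ s 0) = h 0 + Complex.I * s := hfun s hs 0 h0D
    set inv := Function.invFunOn h unitDisc with hinvdef
    set G : ℂ → ℂ := fun z => inv ((1 - (u:ℂ)) * h 0 + (u:ℂ) * h z) with hG
    have hmapsA : ∀ z ∈ unitDisc, (1 - (u:ℂ)) * h 0 + (u:ℂ) * h z ∈ h '' unitDisc :=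
      fun z hz => hstar (h z) (Set.mem_image_of_mem h hz) u ⟨hu0, hu1⟩
    have hGdiff : DifferentiableOn ℂ G unitDisc := by
      apply DifferentiableOn.comp (differentiableOn_invFunOn hopen hd hinj)
        _ hmapsA
      exact (hd.const_mul _).const_add _
    have hGmaps : Set.MapsTo G unitDisc unitDisc := fun z hz =>
      Function.invFunOn_mem ((Set.mem_image _ _ _).mp (hmapsA z hz))
    have hG0 : G 0 = 0 := by
      have he : (1 - (u:ℂ)) * h 0 + (u:ℂ) * h 0 = h 0 := by ring
      show inv ((1 - (u:ℂ)) * h 0 + (u:ℂ) * h 0) = 0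
      rw [he]
      exact hinj.leftInvOn_invFunOn h0D
    have hGt : G (φ t 0) = φ s 0 := by
      have hut : ((u:ℝ):ℂ) * (t:ℂ) = (s:ℂ) := by
        rw [hu]; push_cast
        exact div_mul_cancel₀ _ (by exact_mod_cast h0t.ne')
      have harg : (1 - (u:ℂ)) * h 0 + (u:ℂ) * h (φ t 0) = h (φ s 0) := by
        rw [hht, hhs]
        linear_combination Complex.I * hut
      show inv ((1 - (u:ℂ)) * h 0 + (u:ℂ) * h (φ t 0)) = φ s 0
      rw [harg]
      exact hinj.leftInvOn_invFunOn hzs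
    have hzt1 : ‖φ t 0‖ < 1 := hzt
    have hschwarz : ‖G (φ t 0)‖ ≤ ‖φ t 0‖ :=
      Complex.norm_le_norm_of_mapsTo_ball
        (unitDisc_eq_ball ▸ hGdiff) ((unitDisc_eq_ball ▸ hGmaps).mono_right Metric.ball_subset_closedBall) hG0 hzt1
    rw [hGt] at hschwarz
    unfold totalSpeed
    rw [kD_zero_left, kD_zero_left]
    exact arctanh_le_arctanh (norm_nonneg _) hschwarz hzt1


end
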